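/- Let A be a strictly upper triangular n×n matrix over 𝔽₂ and let R(A) = 𝔽₂[x_1,…,x_n]/(x_j² − x_j α_j : j = 1,…,n) where α_j = ∑_{i=1}^n A^i_j x_i. Let H¹ denote the 𝔽₂-span in R(A) of the images of x_1,…,x_n. If α ∈ H¹ is an eigen-element, i.e. there exists x ∈ H¹ with x² = α x, x ≠ 0 and x ≠ α, then α = α_j for some j ∈ {1,…,n}; moreover, for such α, the eigen-space {x ∈ H¹ : x² = α x} is the 𝔽₂-span of α together with all x_i satisfying α_i = α. -/

import Mathlib

open MvPolynomial Finsupp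

/-- The polynomial `α_j = ∑_i A^i_j x_i`. -/
noncomputable def alphaP {n : ℕ} (A : Matrix (Fin n) (Fin n) (ZMod 2)) (j : Fin n) :
    MvPolynomial (Fin n) (ZMod 2) :=
  ∑ i : Fin n, C (A i j) * X i

/-- The ideal `(x_j² − x_j α_j : j = 1,…,n)`. -/
noncomputable def relIdeal {n : ℕ} (A : Matrix (Fin n) (Fin n) (ZMod 2)) :
    Ideal (MvPolynomial (Fin n) (ZMod 2)) :=
  Ideal.span {p | ∃ j : Fin n, p = X j ^ 2 - X j * alphaP A j}

/-- `R(A) = 𝔽₂[x_1,…,x_n]/(x_j² − x_j α_j)`, the mod 2 cohomology ring of the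
real Bott manifold `M(A)`. -/
def CohomRing {n : ℕ} (A : Matrix (Fin n) (Fin n) (ZMod 2)) : Type :=
  MvPolynomial (Fin n) (ZMod 2) ⧸ relIdeal A

noncomputable instance {n : ℕ} (A : Matrix (Fin n) (Fin n) (ZMod 2)) :
    CommRing (CohomRing A) :=
  Ideal.Quotient.commRing (relIdeal A)

noncomputable instance {n : ℕ} (A : Matrix (Fin n) (Fin n) (ZMod 2)) :
    Algebra (ZMod 2) (CohomRing A) :=
  Ideal.Quotient.algebra (ZMod 2)

/-- The image `x_j` of `X j` in `R(A)`. -/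
noncomputable def xcl {n : ℕ} (A : Matrix (Fin n) (Fin n) (ZMod 2)) (j : Fin n) :
    CohomRing A :=
  Ideal.Quotient.mk (relIdeal A) (X j)

/-- The image of `α_j` in `R(A)`. -/
noncomputable def alphacl {n : ℕ} (A : Matrix (Fin n) (Fin n) (ZMod 2)) (j : Fin n) :
    CohomRing A :=
  Ideal.Quotient.mk (relIdeal A) (alphaP A j)

/-- `H¹`: the `𝔽₂`-span of the images of `x_1,…,x_n` in `R(A)`. -/
noncomputable def H1 {n : ℕ} (A : Matrix (Fin n) (Fin n) (ZMod 2)) :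
    Submodule (ZMod 2) (CohomRing A) :=
  Submodule.span (ZMod 2) (Set.range (xcl A))



section Aux

variable {n : ℕ} (A : Matrix (Fin n) (Fin n) (ZMod 2))

abbrev WW (n : ℕ) := Finset (Fin n) →₀ ZMod 2

noncomputable def MM : Fin n → (WW n →ₗ[ZMod 2] WW n) := fun j =>
  Finsupp.linearCombination (ZMod 2) (fun S : Finset (Fin n) =>
    if j ∈ S then ∑ k : Fin n, (if h : k < j then A k j • MM k (Finsupp.single S 1) else 0)
    else Finsupp.single (insert j S) 1)
termination_by j => j.val
decreasing_by exact h

lemma MM_single (j : Fin n) (S : Finset (Fin n)) :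
    MM A j (Finsupp.single S 1) =
      if j ∈ S then ∑ k : Fin n, (if h : k < j then A k j • MM A k (Finsupp.single S 1) else 0)
      else Finsupp.single (insert j S) 1 := by
  rw [MM]
  simp [Finsupp.linearCombination_single]

lemma MM_single_not_mem {j : Fin n} {S : Finset (Fin n)} (h : j ∉ S) :
    MM A j (Finsupp.single S 1) = Finsupp.single (insert j S) 1 := by
  rw [MM_single, if_neg h]

variable (hA : ∀ i j : Fin n, j ≤ i → A i j = 0)
include hA

lemma MM_single_mem {j : Fin n} {S : Finset (Fin n)} (h : j ∈ S) :
    MM A j (Finsupp.single S 1) = ∑ k : Fin n, A k j • MM A k (Finsupp.single S 1) := by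
  rw [MM_single, if_pos h]
  refine Finset.sum_congr rfl fun k _ => ?_
  by_cases hk : k < j
  · rw [dif_pos hk]
  · rw [dif_neg hk, hA k j (le_of_not_gt hk), zero_smul]

lemma MM_comm_single : ∀ (N : ℕ) (i j : Fin n), i.val + j.val ≤ N → ∀ S : Finset (Fin n),
    MM A i (MM A j (Finsupp.single S 1)) = MM A j (MM A i (Finsupp.single S 1)) := by
  intro N
  induction N with
  | zero =>
    intro i j hij S
    have : i = j := Fin.ext (by omega)
    rw [this]
  | succ N ih =>
    intro i j hij S
    rcases eq_or_ne i j with rfl | hne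
    · rfl
    -- key asymmetric case helper
    have key : ∀ i j : Fin n, i ≠ j → i.val + j.val ≤ N + 1 → j ∈ S → i ∉ S →
        MM A i (MM A j (Finsupp.single S 1)) = MM A j (MM A i (Finsupp.single S 1)) := by
      intro i j hne hij hjS hiS
      rw [MM_single_mem A hA hjS, map_sum]
      rw [MM_single_not_mem A hiS, MM_single_mem A hA (Finset.mem_insert_of_mem hjS)]
      refine Finset.sum_congr rfl fun k _ => ?_
      rw [map_smul]
      by_cases hk : k < j
      · have : MM A i (MM A k (Finsupp.single S 1)) = MM A k (MM A i (Finsupp.single S 1)) := by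
          refine ih i k (by omega) S
        rw [this, MM_single_not_mem A hiS]
      · rw [hA k j (le_of_not_gt hk), zero_smul, zero_smul]
    by_cases hjS : j ∈ S <;> by_cases hiS : i ∈ S
    · -- both in S
      rw [MM_single_mem A hA hjS, map_sum, MM_single_mem A hA hiS, map_sum]
      have step : ∀ (p q : Fin n), q ∈ S → p ∈ S → p.val + q.val ≤ N + 1 →
          ∑ k : Fin n, MM A p (A k q • MM A k (Finsupp.single S 1)) =
          ∑ k : Fin n, ∑ l : Fin n,
            A k q • A l p • MM A k (MM A l (Finsupp.single S 1)) := by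
        intro p q hq hp hpq
        refine Finset.sum_congr rfl fun k _ => ?_
        rw [map_smul]
        by_cases hk : k < q
        · rw [ih p k (by omega) S, MM_single_mem A hA hp, map_sum, Finset.smul_sum]
          refine Finset.sum_congr rfl fun l _ => ?_
          rw [map_smul]
        · rw [hA k q (le_of_not_gt hk)]
          simp
      rw [step i j hjS hiS hij, step j i hiS hjS (by omega), Finset.sum_comm]
      refine Finset.sum_congr rfl fun k _ => Finset.sum_congr rfl fun l _ => ?_
      by_cases h1 : l < j
      · by_cases h2 : k < i
        · rw [smul_comm (A l j), ih l k (by omega) S]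
        · rw [hA k i (le_of_not_gt h2)]
          simp
      · rw [hA l j (le_of_not_gt h1)]
        simp
    · exact key i j hne hij hjS hiS
    · exact (key j i hne.symm (by omega) hiS hjS).symm
    · rw [MM_single_not_mem A hjS, MM_single_not_mem A hiS,
        MM_single_not_mem A (by simp [hne, hiS]), MM_single_not_mem A (by simp [hne.symm, hjS]),
        Finset.insert_comm]

omit hA in
lemma finset_pair_eq_pair_iff {x y z w : Fin n} :
    ({x, y} : Finset (Fin n)) = {z, w} ↔ x = z ∧ y = w ∨ x = w ∧ y = z := by
  rw [← Finset.coe_inj]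
  simp only [Finset.coe_insert, Finset.coe_singleton]
  exact Set.pair_eq_pair_iff

lemma MM_comp (i j : Fin n) : MM A i ∘ₗ MM A j = MM A j ∘ₗ MM A i := by
  refine Finsupp.lhom_ext fun S b => ?_
  have hb : Finsupp.single S b = b • Finsupp.single S 1 := by
    rw [Finsupp.smul_single, smul_eq_mul, mul_one]
  simp only [LinearMap.comp_apply, hb, map_smul]
  rw [MM_comm_single A hA (i.val + j.val) i j le_rfl S]

lemma MM_mul (i j : Fin n) :
    MM A i * MM A j = MM A j * MM A i := MM_comp A hA i j

lemma MM_sq (j : Fin n) :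
    MM A j * MM A j = (∑ k : Fin n, A k j • MM A k) * MM A j := by
  refine Finsupp.lhom_ext fun S b => ?_
  have hb : Finsupp.single S b = b • Finsupp.single S 1 := by
    rw [Finsupp.smul_single, smul_eq_mul, mul_one]
  simp only [Module.End.mul_apply, hb, map_smul, LinearMap.sum_apply, LinearMap.smul_apply]
  congr 1
  by_cases hj : j ∈ S
  · conv_lhs => rw [MM_single_mem A hA hj]
    rw [map_sum]
    refine Finset.sum_congr rfl fun k _ => ?_
    rw [map_smul]
    congr 1
    exact MM_comm_single A hA (j.val + k.val) j k le_rfl S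
  · conv_lhs => rw [MM_single_not_mem A hj,
      MM_single_mem A hA (Finset.mem_insert_self j S)]
    refine Finset.sum_congr rfl fun k _ => ?_
    rw [MM_single_not_mem A hj]

noncomputable def Phi : MvPolynomial (Fin n) (ZMod 2) →ₐ[ZMod 2] Module.End (ZMod 2) (WW n) :=
  letI : CommSemiring (Algebra.adjoin (ZMod 2) (Set.range (MM A))) :=
    Algebra.adjoinCommSemiringOfComm (ZMod 2) (by
      rintro _ ⟨i, rfl⟩ _ ⟨j, rfl⟩
      exact MM_mul A hA i j)
  ((Algebra.adjoin (ZMod 2) (Set.range (MM A))).val).comp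
    (aeval fun j => (⟨MM A j, Algebra.subset_adjoin (Set.mem_range_self j)⟩ :
      Algebra.adjoin (ZMod 2) (Set.range (MM A))))

lemma Phi_X (j : Fin n) : Phi A hA (X j) = MM A j := by
  simp [Phi]

lemma Phi_C (r : ZMod 2) : Phi A hA (C r) = algebraMap (ZMod 2) _ r := by
  simp [Phi]

lemma Phi_alphaP (j : Fin n) : Phi A hA (alphaP A j) = ∑ i : Fin n, A i j • MM A i := by
  rw [alphaP, map_sum]
  refine Finset.sum_congr rfl fun i _ => ?_
  rw [map_mul, Phi_X, Phi_C, ← Algebra.smul_def]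

lemma Phi_rel (j : Fin n) : Phi A hA (X j ^ 2 - X j * alphaP A j) = 0 := by
  rw [map_sub, map_pow, map_mul, Phi_X, Phi_alphaP, pow_two, MM_sq A hA]
  rw [Finset.sum_mul, Finset.mul_sum, sub_eq_zero]
  refine Finset.sum_congr rfl fun k _ => ?_
  rw [smul_mul_assoc, mul_smul_comm, MM_mul A hA]

noncomputable def Psi : CohomRing A →ₐ[ZMod 2] Module.End (ZMod 2) (WW n) :=
  Ideal.Quotient.liftₐ (relIdeal A) (Phi A hA) (by
    intro a ha
    have hle : relIdeal A ≤ RingHom.ker (Phi A hA).toRingHom := by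
      rw [relIdeal]
      refine Ideal.span_le.mpr ?_
      rintro p ⟨j, rfl⟩
      rw [SetLike.mem_coe, RingHom.mem_ker, AlgHom.toRingHom_eq_coe, RingHom.coe_coe]
      exact Phi_rel A hA j
    exact RingHom.mem_ker.mp (hle ha))

lemma Psi_mk (p : MvPolynomial (Fin n) (ZMod 2)) :
    Psi A hA (Ideal.Quotient.mk (relIdeal A) p) = Phi A hA p := by
  rfl

lemma Psi_xcl (j : Fin n) : Psi A hA (xcl A j) = MM A j := by
  rw [xcl, Psi_mk, Phi_X]

lemma Psi_alphacl (j : Fin n) : Psi A hA (alphacl A j) = ∑ i : Fin n, A i j • MM A i := by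
  rw [alphacl, Psi_mk, Phi_alphaP]

omit hA in
lemma MM_single_pair {i j : Fin n} (hij : i ≠ j) :
    MM A i (Finsupp.single ({j} : Finset (Fin n)) (1 : ZMod 2)) =
      Finsupp.single ({i, j} : Finset (Fin n)) 1 := by
  rw [MM_single_not_mem A (by simp [hij])]

omit hA in
lemma zmod2_cases (r : ZMod 2) : r = 0 ∨ r = 1 := by fin_cases r; exacts [Or.inl rfl, Or.inr rfl]

omit hA in
lemma sum_ite_two {a b : Fin n} (hab : a ≠ b) (va vb : ZMod 2) :
    (∑ j : Fin n, if j = b then vb else if j = a then va else 0) = vb + va := by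
  have : ∀ j : Fin n, (if j = b then vb else if j = a then va else 0) =
      (if j = b then vb else 0) + (if j = a then va else 0) := by
    intro j
    by_cases h1 : j = b <;> by_cases h2 : j = a
    · exact absurd (h1.symm.trans h2) hab.symm
    all_goals simp [h1, h2, hab, Ne.symm hab]
  rw [Finset.sum_congr rfl fun j _ => this j, Finset.sum_add_distrib,
    Finset.sum_ite_eq' Finset.univ b (fun _ => vb),
    Finset.sum_ite_eq' Finset.univ a (fun _ => va)]
  simp

lemma MM_pair_val {a b : Fin n} (hab : a < b) (i j : Fin n) :
    (MM A i (Finsupp.single ({j} : Finset (Fin n)) (1 : ZMod 2))) {a, b}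
      = if i = j then (if j = b then A a b else 0)
        else (if ({i, j} : Finset (Fin n)) = {a, b} then 1 else 0) := by
  have hab' : a ≠ b := ne_of_lt hab
  rcases eq_or_ne i j with rfl | hij
  · rw [if_pos rfl, MM_single_mem A hA (Finset.mem_singleton_self i),
      Finsupp.finset_sum_apply]
    have key : ∀ k : Fin n,
        (A k i • MM A k (Finsupp.single ({i} : Finset (Fin n)) (1 : ZMod 2))) {a, b}
          = if (k = a ∧ i = b) ∨ (k = b ∧ i = a) then A k i else 0 := by
      intro k
      rcases eq_or_ne k i with rfl | hki
      · rw [hA k k le_rfl, zero_smul]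
        rw [if_neg]
        · simp
        · rintro (⟨rfl, rfl⟩ | ⟨rfl, rfl⟩) <;> exact hab' rfl
      · rw [Finsupp.smul_apply, MM_single_pair A hki, Finsupp.single_apply]
        simp only [smul_eq_mul, mul_ite, mul_one, mul_zero, finset_pair_eq_pair_iff]
    rw [Finset.sum_congr rfl fun k _ => key k]
    rcases eq_or_ne i b with rfl | hib
    · simp [Ne.symm hab', Finset.sum_ite_eq']
    · rcases eq_or_ne i a with rfl | hia
      · simp [hab', hib, Finset.sum_ite_eq', hA b i (le_of_lt hab)]
      · simp [hib, hia]
  · rw [if_neg hij, MM_single_pair A hij, Finsupp.single_apply]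

lemma apply_pair (u c : Fin n → ZMod 2) {a b : Fin n} (hab : a < b) :
    ((∑ i : Fin n, u i • MM A i)
        (∑ j : Fin n, c j • Finsupp.single ({j} : Finset (Fin n)) (1 : ZMod 2))) {a, b}
      = c b * (u b * A a b + u a) + c a * u b := by
  have hab' : a ≠ b := ne_of_lt hab
  rw [map_sum, Finsupp.finset_sum_apply]
  have step : ∀ j : Fin n,
      ((∑ i : Fin n, u i • MM A i)
          (c j • Finsupp.single ({j} : Finset (Fin n)) (1 : ZMod 2))) {a, b}
        = if j = b then c b * (u b * A a b + u a) else if j = a then c a * u b else 0 := by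
    intro j
    rw [map_smul, Finsupp.smul_apply, LinearMap.sum_apply, Finsupp.finset_sum_apply]
    have inner : ∀ i : Fin n,
        ((u i • MM A i) (Finsupp.single ({j} : Finset (Fin n)) (1 : ZMod 2))) {a, b}
          = u i * (if i = j then (if j = b then A a b else 0)
              else (if ({i, j} : Finset (Fin n)) = {a, b} then 1 else 0)) := by
      intro i
      rw [LinearMap.smul_apply, Finsupp.smul_apply, MM_pair_val A hA hab, smul_eq_mul]
    rw [Finset.sum_congr rfl fun i _ => inner i]
    by_cases hjb : j = b
    · subst hjb
      have e1 : ∀ i : Fin n, u i * (if i = j then (if j = j then A a j else 0)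
            else (if ({i, j} : Finset (Fin n)) = {a, j} then 1 else 0))
          = if i = j then u j * A a j else if i = a then u a else 0 := by
        intro i
        by_cases h1 : i = j
        · simp [h1]
        · by_cases h2 : i = a
          · simp [h1, h2, hab']
          · simp [h1, h2, finset_pair_eq_pair_iff, hab', Ne.symm hab']
      rw [Finset.sum_congr rfl fun i _ => e1 i, sum_ite_two hab' (u a) (u j * A a j),
        smul_eq_mul, if_pos rfl]
    · by_cases hja : j = a
      · subst hja
        have e1 : ∀ i : Fin n, u i * (if i = j then (if j = b then A j b else 0)
              else (if ({i, j} : Finset (Fin n)) = {j, b} then 1 else 0))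
            = if i = b then u b else 0 := by
          intro i
          by_cases h1 : i = j
          · simp [h1, hjb]
          · by_cases h2 : i = b
            · simp [h1, h2, finset_pair_eq_pair_iff, hjb, Ne.symm hjb]
            · simp [h1, h2, finset_pair_eq_pair_iff, hjb]
        rw [Finset.sum_congr rfl fun i _ => e1 i,
          Finset.sum_ite_eq' Finset.univ b (fun _ => u b)]
        simp [hjb]
      · have e1 : ∀ i : Fin n, u i * (if i = j then (if j = b then A a b else 0)
              else (if ({i, j} : Finset (Fin n)) = {a, b} then 1 else 0))
            = 0 := by
          intro i
          by_cases h1 : i = j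
          · simp [h1, hjb]
          · simp [h1, finset_pair_eq_pair_iff, hjb, hja]
        rw [Finset.sum_congr rfl fun i _ => e1 i]
        simp [hjb, hja]
  rw [Finset.sum_congr rfl fun j _ => step j,
    sum_ite_two hab' (c a * u b) (c b * (u b * A a b + u a))]

lemma Psi_L (c : Fin n → ZMod 2) :
    Psi A hA (∑ i : Fin n, c i • xcl A i) = ∑ i : Fin n, c i • MM A i := by
  rw [map_sum]
  exact Finset.sum_congr rfl fun i _ => by rw [map_smul, Psi_xcl]

omit hA in
lemma MM_e0 (i : Fin n) :
    MM A i (Finsupp.single (∅ : Finset (Fin n)) (1 : ZMod 2)) =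
      Finsupp.single ({i} : Finset (Fin n)) 1 :=
  MM_single_not_mem A (Finset.notMem_empty i)

lemma star_eq (c t : Fin n → ZMod 2)
    (h : (∑ i : Fin n, c i • xcl A i) ^ 2
        = (∑ i : Fin n, t i • xcl A i) * (∑ i : Fin n, c i • xcl A i))
    {a b : Fin n} (hab : a < b) :
    c b * (1 + t b) * A a b + c a * t b + c b * t a = 0 := by
  have h2 := congrArg (Psi A hA) h
  rw [map_pow, map_mul, Psi_L, Psi_L] at h2
  have h3 := congrArg
    (fun f : Module.End (ZMod 2) (WW n) => (f (Finsupp.single ∅ 1)) ({a, b} : Finset (Fin n))) h2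
  simp only [pow_two, Module.End.mul_apply] at h3
  have he : (∑ i : Fin n, c i • MM A i) (Finsupp.single (∅ : Finset (Fin n)) (1 : ZMod 2))
      = ∑ j : Fin n, c j • Finsupp.single ({j} : Finset (Fin n)) (1 : ZMod 2) := by
    rw [LinearMap.sum_apply]
    exact Finset.sum_congr rfl fun i _ => by rw [LinearMap.smul_apply, MM_e0]
  rw [he, apply_pair A hA c c hab, apply_pair A hA t c hab] at h3
  revert h3
  generalize c a = ca
  generalize c b = cb
  generalize t a = ta
  generalize t b = tb
  generalize A a b = x
  revert ca cb ta tb x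
  decide

omit hA in
lemma CR_add_self (x : CohomRing A) : x + x = 0 := by
  have h : (2 : ZMod 2) • x = x + x := two_smul _ x
  rw [show (2 : ZMod 2) = 0 by decide, zero_smul] at h
  exact h.symm

omit hA in
lemma CR_sq_add (x y : CohomRing A) : (x + y) ^ 2 = x ^ 2 + y ^ 2 := by
  have h : (x + y) ^ 2 = x ^ 2 + (x * y + x * y) + y ^ 2 := by ring
  rw [CR_add_self, add_zero] at h
  exact h

omit hA in
lemma xcl_sq (j : Fin n) : (xcl A j) ^ 2 = alphacl A j * xcl A j := by
  have h : Ideal.Quotient.mk (relIdeal A) (X j ^ 2 - X j * alphaP A j) = 0 :=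
    Ideal.Quotient.eq_zero_iff_mem.mpr (Ideal.subset_span ⟨j, rfl⟩)
  rw [map_sub, map_pow, map_mul, sub_eq_zero] at h
  rw [xcl, alphacl]
  exact h.trans (mul_comm _ _)

omit hA in
lemma alphacl_sum (j : Fin n) : alphacl A j = ∑ i : Fin n, A i j • xcl A i := by
  rw [alphacl, alphaP, map_sum]
  refine Finset.sum_congr rfl fun i _ => ?_
  rcases zmod2_cases (A i j) with h | h <;> rw [h]
  · simp [xcl]
    exact (zero_smul (ZMod 2) (xcl A i)).symm
  · simp [xcl]
    exact (one_smul (ZMod 2) (xcl A i)).symm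

noncomputable def philin : CohomRing A →ₗ[ZMod 2] WW n :=
  (LinearMap.applyₗ (Finsupp.single (∅ : Finset (Fin n)) (1 : ZMod 2))).comp
    (Psi A hA).toLinearMap

lemma philin_L (c : Fin n → ZMod 2) :
    philin A hA (∑ i : Fin n, c i • xcl A i)
      = ∑ i : Fin n, c i • Finsupp.single ({i} : Finset (Fin n)) (1 : ZMod 2) := by
  have : philin A hA (∑ i : Fin n, c i • xcl A i)
      = (Psi A hA (∑ i : Fin n, c i • xcl A i)) (Finsupp.single ∅ 1) := rfl
  rw [this, Psi_L, LinearMap.sum_apply]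
  exact Finset.sum_congr rfl fun i _ => by rw [LinearMap.smul_apply, MM_e0]

omit hA in
lemma sum_single_apply (c : Fin n → ZMod 2) (i0 : Fin n) :
    (∑ i : Fin n, c i • Finsupp.single ({i} : Finset (Fin n)) (1 : ZMod 2))
      ({i0} : Finset (Fin n)) = c i0 := by
  rw [Finsupp.finset_sum_apply]
  have : ∀ i : Fin n,
      (c i • Finsupp.single ({i} : Finset (Fin n)) (1 : ZMod 2)) ({i0} : Finset (Fin n))
        = if i = i0 then c i else 0 := by
    intro i
    rw [Finsupp.smul_apply, Finsupp.single_apply]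
    by_cases h : i = i0
    · simp [h]
    · simp [h, Finset.singleton_inj]
  rw [Finset.sum_congr rfl fun i _ => this i, Finset.sum_ite_eq' Finset.univ i0 c]
  simp

lemma L_inj {c d : Fin n → ZMod 2}
    (h : ∑ i : Fin n, c i • xcl A i = ∑ i : Fin n, d i • xcl A i) : c = d := by
  funext i0
  have := congrArg (fun w : WW n => w ({i0} : Finset (Fin n))) (congrArg (philin A hA) h)
  simpa only [philin_L, sum_single_apply] using this

omit hA in
lemma zmod2_add_eq_zero {x y : ZMod 2} (h : x + y = 0) : x = y := by
  revert h
  revert x y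
  decide

lemma core (c t : Fin n → ZMod 2)
    (hstar : ∀ a b : Fin n, a < b →
      c b * (1 + t b) * A a b + c a * t b + c b * t a = 0)
    (hc : c ≠ 0) (hct : c ≠ t) :
    ∃ j : Fin n, c j = 1 ∧ t = fun i => A i j := by
  have hS : (Finset.univ.filter (fun i => c i = 1)).Nonempty := by
    obtain ⟨i, hi⟩ := Function.ne_iff.mp hc
    exact ⟨i, Finset.mem_filter.mpr ⟨Finset.mem_univ i,
      (zmod2_cases (c i)).resolve_left hi⟩⟩
  set S := Finset.univ.filter (fun i => c i = 1) with hSdef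
  let j := S.max' hS
  have hcj : c j = 1 := (Finset.mem_filter.mp (S.max'_mem hS)).2
  have hmax : ∀ k, j < k → c k = 0 := by
    intro k hk
    rcases zmod2_cases (c k) with h | h
    · exact h
    · exact absurd (S.le_max' k (Finset.mem_filter.mpr ⟨Finset.mem_univ k, h⟩))
        (not_le.mpr hk)
  refine ⟨j, hcj, ?_⟩
  have claim1 : ∀ b, j < b → t b = 0 := by
    intro b hb
    have h := hstar j b hb
    rw [hmax b hb, hcj] at h
    simpa using h
  have claim2 : t j = 0 := by
    rcases zmod2_cases (t j) with h | h
    · exact h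
    exfalso
    apply hct
    funext i
    rcases lt_trichotomy i j with hij | rfl | hij
    · have h2 := hstar i j hij
      rw [hcj, h] at h2
      rw [show (1 : ZMod 2) + 1 = 0 by decide] at h2
      simp only [mul_zero, zero_mul, mul_one, one_mul, zero_add] at h2
      exact zmod2_add_eq_zero h2
    · rw [hcj, h]
    · rw [hmax i hij, claim1 i hij]
  funext i
  show t i = A i j
  rcases lt_trichotomy i j with hij | heq | hij
  · have h2 := hstar i j hij
    rw [hcj, claim2] at h2
    simp only [add_zero, mul_zero, mul_one, one_mul, zero_add] at h2
    exact (zmod2_add_eq_zero h2).symm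
  · rw [heq, claim2, hA j j le_rfl]
  · rw [claim1 i hij, hA i j (le_of_lt hij)]

end Aux

/-- For a strictly upper triangular `A`, every eigen-element `α` of `R(A)`
(an `α ∈ H¹` such that `x² = α x` for some `x ∈ H¹` with `x ≠ 0`, `x ≠ α`)
equals some `α_j`, and its eigen-space `{x ∈ H¹ : x² = α x}` is the `𝔽₂`-span
of `α` together with all `x_i` with `α_i = α`. -/
theorem eigen_element_characterization {n : ℕ}
    (A : Matrix (Fin n) (Fin n) (ZMod 2))
    (hA : ∀ i j : Fin n, j ≤ i → A i j = 0)
    (α : CohomRing A) (hα : α ∈ H1 A)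
    (heigen : ∃ x : CohomRing A, x ∈ H1 A ∧ x ^ 2 = α * x ∧ x ≠ 0 ∧ x ≠ α) :
    (∃ j : Fin n, α = alphacl A j) ∧
    {x : CohomRing A | x ∈ H1 A ∧ x ^ 2 = α * x} =
      ↑(Submodule.span (ZMod 2)
        ({α} ∪ {x : CohomRing A | ∃ i : Fin n, alphacl A i = α ∧ x = xcl A i})) := by
  obtain ⟨t, ht⟩ := (Submodule.mem_span_range_iff_exists_fun (ZMod 2)).mp hα
  obtain ⟨x, hxH, hx2, hx0, hxa⟩ := heigen
  obtain ⟨c, hc⟩ := (Submodule.mem_span_range_iff_exists_fun (ZMod 2)).mp hxH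
  have hstar0 : ∀ c' : Fin n → ZMod 2,
      (∑ i : Fin n, c' i • xcl A i) ^ 2 = α * (∑ i : Fin n, c' i • xcl A i) →
      ∀ a b : Fin n, a < b →
        c' b * (1 + t b) * A a b + c' a * t b + c' b * t a = 0 := by
    intro c' hsol a b hab
    exact star_eq A hA c' t (by rw [ht]; exact hsol) hab
  have hxsol : (∑ i : Fin n, c i • xcl A i) ^ 2 = α * (∑ i : Fin n, c i • xcl A i) := by
    rw [hc]; exact hx2
  have hc0 : c ≠ 0 := by
    intro h
    apply hx0
    rw [← hc]
    simp [h]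
  have hct : c ≠ t := by
    intro h
    apply hxa
    rw [← hc, h, ht]
  obtain ⟨j0, hcj0, htj0⟩ := core A hA c t (hstar0 c hxsol) hc0 hct
  have halpha : α = alphacl A j0 := by
    rw [alphacl_sum, ← ht]
    exact Finset.sum_congr rfl fun i _ => by
      rw [show t i = A i j0 from by rw [htj0]]
  refine ⟨⟨j0, halpha⟩, ?_⟩
  have gensub : ({α} ∪ {x : CohomRing A | ∃ i : Fin n, alphacl A i = α ∧ x = xcl A i})
      ⊆ {x : CohomRing A | x ∈ H1 A ∧ x ^ 2 = α * x} := by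
    rintro z (hz | ⟨i, hiα, rfl⟩)
    · rw [Set.mem_singleton_iff] at hz
      subst hz
      exact ⟨hα, by rw [pow_two]⟩
    · exact ⟨Submodule.subset_span ⟨i, rfl⟩, by rw [xcl_sq, hiα]⟩
  let E : Submodule (ZMod 2) (CohomRing A) :=
    { carrier := {x : CohomRing A | x ∈ H1 A ∧ x ^ 2 = α * x}
      add_mem' := fun {p q} hp hq => ⟨(H1 A).add_mem hp.1 hq.1, by
        rw [CR_sq_add, hp.2, hq.2, mul_add]⟩
      zero_mem' := ⟨(H1 A).zero_mem, by
        rw [zero_pow (by norm_num : (2 : ℕ) ≠ 0), mul_zero]⟩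
      smul_mem' := by
        intro r p hp
        rcases zmod2_cases r with h | h
        · rw [h, zero_smul]
          exact ⟨(H1 A).zero_mem, by
            rw [zero_pow (by norm_num : (2 : ℕ) ≠ 0), mul_zero]⟩
        · rw [h, one_smul]
          exact hp }
  have main : ∀ m : ℕ, ∀ c' : Fin n → ZMod 2,
      (Finset.univ.filter (fun i => c' i = 1)).card ≤ m →
      (∑ i : Fin n, c' i • xcl A i) ^ 2 = α * (∑ i : Fin n, c' i • xcl A i) →
      (∑ i : Fin n, c' i • xcl A i) ∈ Submodule.span (ZMod 2)
        ({α} ∪ {x : CohomRing A | ∃ i : Fin n, alphacl A i = α ∧ x = xcl A i}) := by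
    intro m
    induction m with
    | zero =>
      intro c' hcard _
      have hall : ∀ i, c' i = 0 := by
        intro i
        rcases zmod2_cases (c' i) with h | h
        · exact h
        · exfalso
          have hmem : i ∈ Finset.univ.filter (fun i => c' i = 1) :=
            Finset.mem_filter.mpr ⟨Finset.mem_univ i, h⟩
          have := Finset.card_pos.mpr ⟨i, hmem⟩
          omega
      have hzero : (∑ i : Fin n, c' i • xcl A i) = 0 := by simp [hall]
      rw [hzero]
      exact Submodule.zero_mem _
    | succ m ih =>
      intro c' hcard hsol
      by_cases hc'0 : c' = 0
      · have hzero : (∑ i : Fin n, c' i • xcl A i) = 0 := by simp [hc'0]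
        rw [hzero]
        exact Submodule.zero_mem _
      by_cases hc't : c' = t
      · have hα' : (∑ i : Fin n, c' i • xcl A i) = α := by rw [hc't, ht]
        rw [hα']
        exact Submodule.subset_span (Set.mem_union_left _ rfl)
      obtain ⟨j', hcj', htj'⟩ := core A hA c' t (hstar0 c' hsol) hc'0 hc't
      have halpha' : alphacl A j' = α := by
        rw [alphacl_sum, ← ht]
        exact (Finset.sum_congr rfl fun i _ => by
          rw [show t i = A i j' from by rw [htj']]).symm
      set c'' := Function.update c' j' (0 : ZMod 2) with hc''def
      have hupd : ∀ i, c'' i = if i = j' then 0 else c' i :=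
        fun i => Function.update_apply c' j' 0 i
      have hsplit : (∑ i : Fin n, c' i • xcl A i)
          = (∑ i : Fin n, c'' i • xcl A i) + xcl A j' := by
        have h1 : ∀ i : Fin n, c' i • xcl A i
            = c'' i • xcl A i + (if i = j' then xcl A j' else 0) := by
          intro i
          by_cases h : i = j'
          · rw [hupd, if_pos h, if_pos h, zero_smul, zero_add, h, hcj', one_smul]
          · rw [hupd, if_neg h, if_neg h, add_zero]
        rw [Finset.sum_congr rfl fun i _ => h1 i, Finset.sum_add_distrib,
          Finset.sum_ite_eq' Finset.univ j' (fun _ => xcl A j')]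
        simp
      have he : (∑ i : Fin n, c'' i • xcl A i)
          = (∑ i : Fin n, c' i • xcl A i) + xcl A j' := by
        rw [hsplit, add_assoc, CR_add_self, add_zero]
      have hsol'' : (∑ i : Fin n, c'' i • xcl A i) ^ 2
          = α * (∑ i : Fin n, c'' i • xcl A i) := by
        rw [he, CR_sq_add, hsol, xcl_sq, halpha', ← mul_add]
      have hcard'' : (Finset.univ.filter (fun i => c'' i = 1)).card ≤ m := by
        have hfe : Finset.univ.filter (fun i => c'' i = 1) =
            (Finset.univ.filter (fun i => c' i = 1)).erase j' := by
          ext i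
          simp only [Finset.mem_filter, Finset.mem_erase, Finset.mem_univ, true_and]
          rw [hupd]
          by_cases h : i = j' <;> simp [h]
        have hjmem : j' ∈ Finset.univ.filter (fun i => c' i = 1) :=
          Finset.mem_filter.mpr ⟨Finset.mem_univ _, hcj'⟩
        rw [hfe, Finset.card_erase_of_mem hjmem]
        omega
      have hmem'' := ih c'' hcard'' hsol''
      rw [hsplit]
      exact Submodule.add_mem _ hmem''
        (Submodule.subset_span (Set.mem_union_right _ ⟨j', halpha', rfl⟩))
  ext y
  simp only [Set.mem_setOf_eq, SetLike.mem_coe]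
  constructor
  · rintro ⟨hyH, hy2⟩
    obtain ⟨c', hc'⟩ := (Submodule.mem_span_range_iff_exists_fun (ZMod 2)).mp hyH
    rw [← hc']
    exact main _ c' le_rfl (by rw [hc']; exact hy2)
  · intro hy
    exact (Submodule.span_le.mpr gensub : _ ≤ E) hy
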